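/- arXiv:1101.4090 — 4 statements merged into one kernel-verified Lean document; each statement's English description precedes it below -/
import Mathlib

section
/- Gauss' theorem for dynamical systems: for all ψ ∈ C_b^1(Ω) and φ ∈ C_b^1(Ω)^n, ∫_Ω ψ ∂_{ω,i} φ_i dμ = −∫_Ω (∂_{ω,i} ψ) φ_i dμ for each i, i.e. ∫_Ω ψ div_ω φ dμ = −∫_Ω ∇_ω ψ · φ dμ. -/
open MeasureTheory Function

/-- Gauss' theorem for dynamical systems: ∫ ψ ∂ᵢφᵢ dμ = −∫ (∂ᵢψ) φᵢ dμ, and the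
divergence form ∫ ψ div_ω φ dμ = −∫ ∇_ω ψ · φ dμ. -/
theorem stmt_4 (n : ℕ) (Ω : Type*) [MetricSpace Ω] [MeasurableSpace Ω] [BorelSpace Ω]
    (μ : Measure Ω) [IsProbabilityMeasure μ]
    (τ : (Fin n → ℝ) → Ω → Ω)
    (hgrp : ∀ x y, τ x ∘ τ y = τ (x + y)) (hid : τ 0 = id)
    (hcont : Continuous fun p : (Fin n → ℝ) × Ω => τ p.1 p.2)
    (hmp : ∀ x, MeasurePreserving (τ x) μ μ)
    (herg : ∀ f : Ω → ℝ, Measurable f →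
      (∀ x, ∀ᵐ ω ∂μ, f (τ x ω) = f ω) → ∃ c : ℝ, ∀ᵐ ω ∂μ, f ω = c)
    (ψ : Ω → ℝ) (Dψ : Ω → Fin n → ℝ)
    (hψc : Continuous ψ) (hψb : ∃ C, ∀ ω, |ψ ω| ≤ C)
    (hψd : ∀ ω i, HasDerivAt (fun h : ℝ => ψ (τ (h • (Pi.single i 1 : Fin n → ℝ)) ω)) (Dψ ω i) 0)
    (hDψc : Continuous Dψ) (hDψb : ∃ C, ∀ ω i, |Dψ ω i| ≤ C)
    (φ : Ω → Fin n → ℝ) (Dφ : Ω → Fin n → Fin n → ℝ)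
    (hφc : Continuous φ) (hφb : ∃ C, ∀ ω i, |φ ω i| ≤ C)
    (hφd : ∀ ω i j, HasDerivAt (fun h : ℝ => φ (τ (h • (Pi.single i 1 : Fin n → ℝ)) ω) j) (Dφ ω i j) 0)
    (hDφc : Continuous Dφ) (hDφb : ∃ C, ∀ ω i j, |Dφ ω i j| ≤ C) :
    (∀ i, ∫ ω, ψ ω * Dφ ω i i ∂μ = - ∫ ω, Dψ ω i * φ ω i ∂μ) ∧
    ∫ ω, ψ ω * ∑ i, Dφ ω i i ∂μ = - ∫ ω, ∑ i, Dψ ω i * φ ω i ∂μ := by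
  obtain ⟨Cψ, hCψ⟩ := hψb
  obtain ⟨CDψ, hCDψ⟩ := hDψb
  obtain ⟨Cφ, hCφ⟩ := hφb
  obtain ⟨CDφ, hCDφ⟩ := hDφb
  -- continuity of each translation
  have hτc : ∀ v : Fin n → ℝ, Continuous (τ v) := fun v =>
    hcont.comp (continuous_const.prodMk continuous_id)
  -- integrability of bounded continuous functions
  have hint : ∀ f : Ω → ℝ, Continuous f → ∀ C : ℝ, (∀ ω, |f ω| ≤ C) → Integrable f μ := by
    intro f hf C hC
    exact (integrable_const C).mono' hf.aestronglyMeasurable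
      (ae_of_all _ fun ω => by simpa [Real.norm_eq_abs] using hC ω)
  -- each translation is a measurable embedding
  have hemb : ∀ v : Fin n → ℝ, MeasurableEmbedding (τ v) := by
    intro v
    have hli : ∀ ω, τ (-v) (τ v ω) = ω := by
      intro ω
      have := congrFun (hgrp (-v) v) ω
      simp only [Function.comp_apply, neg_add_cancel, hid, id_eq] at this
      exact this
    have hri : ∀ ω, τ v (τ (-v) ω) = ω := by
      intro ω
      have := congrFun (hgrp v (-v)) ω
      simp only [Function.comp_apply, add_neg_cancel, hid, id_eq] at this
      exact this
    exact (Homeomorph.mk ⟨τ v, τ (-v), hli, hri⟩ (hτc v) (hτc (-v))).measurableEmbedding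
  -- the key identity
  have key : ∀ i, ∫ ω, (Dψ ω i * φ ω i + ψ ω * Dφ ω i i) ∂μ = 0 := by
    intro i
    set e : Fin n → ℝ := Pi.single i 1 with he
    set F : ℝ → Ω → ℝ := fun h ω => ψ (τ (h • e) ω) * φ (τ (h • e) ω) i with hF
    set F' : ℝ → Ω → ℝ := fun h ω =>
      Dψ (τ (h • e) ω) i * φ (τ (h • e) ω) i + ψ (τ (h • e) ω) * Dφ (τ (h • e) ω) i i with hF'
    have hτ0 : ∀ ω : Ω, τ ((0:ℝ) • e) ω = ω := by
      intro ω; rw [zero_smul, hid]; rfl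
    -- derivative of F in h, everywhere
    have hderiv : ∀ (h : ℝ) (ω : Ω), HasDerivAt (fun s => F s ω) (F' h ω) h := by
      intro h ω
      set ω' := τ (h • e) ω with hω'
      have h1 : HasDerivAt (fun t : ℝ => ψ (τ (t • e) ω') * φ (τ (t • e) ω') i)
          (Dψ ω' i * φ ω' i + ψ ω' * Dφ ω' i i) 0 := by
        have := (hψd ω' i).mul (hφd ω' i i)
        simp only [zero_smul, hid, id_eq] at this
        exact this
      have h2 : HasDerivAt (fun s : ℝ => s - h) 1 h := by
        simpa using (hasDerivAt_id h).sub_const h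
      have h3 := HasDerivAt.comp h (by simpa using h1) h2
      have hshift : ∀ s : ℝ, τ ((s - h) • e) ω' = τ (s • e) ω := by
        intro s
        have hc := congrFun (hgrp ((s - h) • e) (h • e)) ω
        simp only [Function.comp_apply] at hc
        rw [hω', hc, ← add_smul, sub_add_cancel]
      have heq : (fun s : ℝ => ψ (τ ((s - h) • e) ω') * φ (τ ((s - h) • e) ω') i)
          = fun s => F s ω := by
        funext s; rw [hshift s]
      rw [show F' h ω = (Dψ ω' i * φ ω' i + ψ ω' * Dφ ω' i i) * 1 by rw [mul_one]]
      have h3' : HasDerivAt (fun s : ℝ => ψ (τ ((s - h) • e) ω') * φ (τ ((s - h) • e) ω') i)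
          ((Dψ ω' i * φ ω' i + ψ ω' * Dφ ω' i i) * 1) h := h3
      rwa [heq] at h3'
    -- continuity in ω for fixed h
    have hFc : ∀ h : ℝ, Continuous (F h) := by
      intro h
      exact (hψc.comp (hτc _)).mul (((continuous_apply i).comp hφc).comp (hτc _))
    have hF'c : ∀ h : ℝ, Continuous (F' h) := by
      intro h
      exact ((((continuous_apply i).comp hDψc).comp (hτc _)).mul
        (((continuous_apply i).comp hφc).comp (hτc _))).add
        ((hψc.comp (hτc _)).mul
          ((((continuous_apply i).comp ((continuous_apply i).comp hDφc)).comp (hτc _))))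
    -- bound
    have hbound : ∀ (ω : Ω) (h : ℝ), |F' h ω| ≤ CDψ * Cφ + Cψ * CDφ := by
      intro ω h
      have b1 : |Dψ (τ (h • e) ω) i * φ (τ (h • e) ω) i| ≤ CDψ * Cφ := by
        rw [abs_mul]
        exact mul_le_mul (hCDψ _ _) (hCφ _ _) (abs_nonneg _)
          (le_trans (abs_nonneg _) (hCDψ (τ (h • e) ω) i))
      have b2 : |ψ (τ (h • e) ω) * Dφ (τ (h • e) ω) i i| ≤ Cψ * CDφ := by
        rw [abs_mul]
        exact mul_le_mul (hCψ _) (hCDφ _ _ _) (abs_nonneg _)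
          (le_trans (abs_nonneg _) (hCψ (τ (h • e) ω)))
      calc |F' h ω| ≤ _ + _ := abs_add_le _ _
        _ ≤ CDψ * Cφ + Cψ * CDφ := add_le_add b1 b2
    -- differentiate under the integral
    obtain ⟨-, hDI⟩ := hasDerivAt_integral_of_dominated_loc_of_deriv_le (μ := μ)
      (F := F) (F' := F') (x₀ := 0) (bound := fun _ => CDψ * Cφ + Cψ * CDφ) (s := Set.univ) Filter.univ_mem
      (Filter.Eventually.of_forall fun h => (hFc h).aestronglyMeasurable)
      (hint _ (hFc 0) (Cψ * Cφ) (fun ω => by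
        rw [hF]; simp only; rw [abs_mul]
        exact mul_le_mul (hCψ _) (hCφ _ _) (abs_nonneg _)
          (le_trans (abs_nonneg _) (hCψ (τ ((0:ℝ) • e) ω)))))
      (hF'c 0).aestronglyMeasurable
      (ae_of_all _ fun ω h _ => by simpa [Real.norm_eq_abs] using hbound ω h)
      (integrable_const _)
      (ae_of_all _ fun ω h _ => hderiv h ω)
    -- the integral is constant in h
    have hconst : ∀ h : ℝ, ∫ ω, F h ω ∂μ = ∫ ω, ψ ω * φ ω i ∂μ := by
      intro h
      exact (hmp (h • e)).integral_comp (hemb (h • e)) (fun ω => ψ ω * φ ω i)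
    have hzero : HasDerivAt (fun h : ℝ => ∫ ω, F h ω ∂μ) 0 0 := by
      have : (fun h : ℝ => ∫ ω, F h ω ∂μ) = fun _ => ∫ ω, ψ ω * φ ω i ∂μ := funext hconst
      rw [this]; exact hasDerivAt_const _ _
    have huniq : (∫ ω, F' 0 ω ∂μ) = 0 := hDI.unique hzero
    have hF'0 : ∀ ω, F' 0 ω = Dψ ω i * φ ω i + ψ ω * Dφ ω i i := by
      intro ω; rw [hF']; simp only [hτ0]
    rw [← huniq]
    exact integral_congr_ae (ae_of_all _ fun ω => (hF'0 ω).symm)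
  -- integrability of the summands
  have hint1 : ∀ i, Integrable (fun ω => Dψ ω i * φ ω i) μ := by
    intro i
    refine hint _ (((continuous_apply i).comp hDψc).mul ((continuous_apply i).comp hφc))
      (CDψ * Cφ) fun ω => ?_
    rw [abs_mul]
    exact mul_le_mul (hCDψ _ _) (hCφ _ _) (abs_nonneg _)
      (le_trans (abs_nonneg _) (hCDψ ω i))
  have hint2 : ∀ i, Integrable (fun ω => ψ ω * Dφ ω i i) μ := by
    intro i
    refine hint _ (hψc.mul ((continuous_apply i).comp ((continuous_apply i).comp hDφc)))
      (Cψ * CDφ) fun ω => ?_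
    rw [abs_mul]
    exact mul_le_mul (hCψ _) (hCDφ _ _ _) (abs_nonneg _)
      (le_trans (abs_nonneg _) (hCψ ω))
  have main : ∀ i, ∫ ω, ψ ω * Dφ ω i i ∂μ = - ∫ ω, Dψ ω i * φ ω i ∂μ := by
    intro i
    have := key i
    rw [integral_add (hint1 i) (hint2 i)] at this
    linarith
  refine ⟨main, ?_⟩
  have hl : ∫ ω, ψ ω * ∑ i, Dφ ω i i ∂μ = ∑ i, ∫ ω, ψ ω * Dφ ω i i ∂μ := by
    rw [← integral_finset_sum _ fun i _ => hint2 i]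
    congr 1; funext ω; rw [Finset.mul_sum]
  have hr : ∫ ω, ∑ i, Dψ ω i * φ ω i ∂μ = ∑ i, ∫ ω, Dψ ω i * φ ω i ∂μ :=
    integral_finset_sum _ fun i _ => hint1 i
  rw [hl, hr, ← Finset.sum_neg_distrib]
  exact Finset.sum_congr rfl fun i _ => main i
end

section
/- For the homogenized diffusion matrix D^hom with entries D^hom_{ij} = ∫_Ω (e_i · D ∇_ω φ_j + D_{ij}) dμ, where φ_j solves the cell problem div_ω(D ∇_ω φ_j) = −div_ω(D e_j) weakly, D^hom is symmetric: D^hom_{ij} = D^hom_{ji}; equivalently D^hom_{ij} = ∫_Ω (e_i + ∇_ω φ_i) · D (e_j + ∇_ω φ_j) dμ. -/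
open MeasureTheory Matrix

/-- Product of two L² functions is integrable. -/
lemma stmt13_mul_int {Ω : Type*} [MeasurableSpace Ω] {μ : Measure Ω}
    {f g : Ω → ℝ} (hf : MemLp f 2 μ) (hg : MemLp g 2 μ) :
    Integrable (fun ω => f ω * g ω) μ := by
  have hf2 := hf.integrable_sq
  have hg2 := hg.integrable_sq
  refine Integrable.mono' ((hf2.add hg2).const_mul (1/2 : ℝ))
    (hf.aestronglyMeasurable.mul hg.aestronglyMeasurable) ?_
  filter_upwards with ω
  simp only [Real.norm_eq_abs, Pi.add_apply]
  nlinarith [sq_abs (f ω), sq_abs (g ω), sq_nonneg (|f ω| - |g ω|),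
    abs_mul (f ω) (g ω), abs_nonneg (f ω), abs_nonneg (g ω)]

/-- Symmetry of the homogenized diffusion matrix D^hom, and its energy-form representation. -/
theorem stmt_13 (n : ℕ) (Ω : Type*) [MeasurableSpace Ω]
    (μ : Measure Ω) [IsProbabilityMeasure μ]
    (D : Ω → Matrix (Fin n) (Fin n) ℝ)
    (hDmeas : ∀ i j, Measurable fun ω => D ω i j)
    (hDbdd : ∃ C, ∀ ω i j, |D ω i j| ≤ C)
    (hDsymm : ∀ ω, (D ω).IsSymm)
    (c : ℝ) (hc : 0 < c)
    (hDell : ∀ (ω : Ω) (η : Fin n → ℝ), c * ∑ k, η k ^ 2 ≤ η ⬝ᵥ ((D ω) *ᵥ η))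
    (gradφ : Fin n → Ω → Fin n → ℝ)
    (hgmeas : ∀ j, Measurable (gradφ j))
    (hgL2 : ∀ j, MemLp (gradφ j) 2 μ)
    -- weak cell problem tested with ∇_ω φ_i :
    (hcell : ∀ i j, ∫ ω, gradφ i ω ⬝ᵥ ((D ω) *ᵥ (gradφ j ω + (Pi.single j 1 : Fin n → ℝ))) ∂μ = 0)
    (Dhom : Matrix (Fin n) (Fin n) ℝ)
    (hDhom : ∀ i j, Dhom i j
      = ∫ ω, (Pi.single i 1 : Fin n → ℝ) ⬝ᵥ ((D ω) *ᵥ (gradφ j ω + (Pi.single j 1 : Fin n → ℝ))) ∂μ) :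
    (∀ i j, Dhom i j = Dhom j i) ∧
    (∀ i j, Dhom i j
      = ∫ ω, ((Pi.single i 1 : Fin n → ℝ) + gradφ i ω) ⬝ᵥ
          ((D ω) *ᵥ ((Pi.single j 1 : Fin n → ℝ) + gradφ j ω)) ∂μ) := by
  obtain ⟨C, hC⟩ := hDbdd
  -- integrability of quadratic forms of L² vector fields
  have hInt : ∀ (v w : Ω → Fin n → ℝ), Measurable v → Measurable w →
      MemLp v 2 μ → MemLp w 2 μ →
      Integrable (fun ω => v ω ⬝ᵥ (D ω *ᵥ w ω)) μ := by
    intro v w hv hw hv2 hw2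
    have hexp : (fun ω => v ω ⬝ᵥ (D ω *ᵥ w ω)) =
        fun ω => ∑ a, ∑ b, v ω a * (D ω a b * w ω b) := by
      funext ω; simp [dotProduct, mulVec, Finset.mul_sum]
    rw [hexp]
    refine integrable_finset_sum _ fun a _ => integrable_finset_sum _ fun b _ => ?_
    have hva : MemLp (fun ω => v ω a) 2 μ :=
      hv2.mono ((measurable_pi_apply a).comp hv).aestronglyMeasurable
        (Filter.Eventually.of_forall fun ω => norm_le_pi_norm (v ω) a)
    have hwb : MemLp (fun ω => w ω b) 2 μ :=
      hw2.mono ((measurable_pi_apply b).comp hw).aestronglyMeasurable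
        (Filter.Eventually.of_forall fun ω => norm_le_pi_norm (w ω) b)
    have hvw : Integrable (fun ω => v ω a * w ω b) μ := stmt13_mul_int hva hwb
    refine Integrable.mono' (hvw.abs.const_mul C)
      (((measurable_pi_apply a).comp hv).mul
        ((hDmeas a b).mul ((measurable_pi_apply b).comp hw))).aestronglyMeasurable ?_
    filter_upwards with ω
    have h1 := hC ω a b
    have h2 : |v ω a * (D ω a b * w ω b)| = |v ω a| * (|D ω a b| * |w ω b|) := by
      rw [abs_mul, abs_mul]
    have h3 : |v ω a * w ω b| = |v ω a| * |w ω b| := abs_mul _ _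
    simp only [Real.norm_eq_abs, h2, h3]
    have h4 := mul_le_mul_of_nonneg_right
      (mul_le_mul_of_nonneg_left h1 (abs_nonneg (v ω a))) (abs_nonneg (w ω b))
    nlinarith [h4]
  -- pointwise symmetry of the quadratic form
  have hsym : ∀ (ω : Ω) (v w : Fin n → ℝ), v ⬝ᵥ (D ω *ᵥ w) = w ⬝ᵥ (D ω *ᵥ v) := by
    intro ω v w
    simp only [dotProduct, mulVec, Finset.mul_sum]
    rw [Finset.sum_comm]
    refine Finset.sum_congr rfl fun a _ => Finset.sum_congr rfl fun b _ => ?_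
    rw [(hDsymm ω).apply a b]; ring
  -- measurability / L² of the fields
  have hmeasw : ∀ j, Measurable (fun ω => gradφ j ω + (Pi.single j 1 : Fin n → ℝ)) :=
    fun j => (hgmeas j).add measurable_const
  have hL2w : ∀ j, MemLp (fun ω => gradφ j ω + (Pi.single j 1 : Fin n → ℝ)) 2 μ :=
    fun j => (hgL2 j).add (memLp_const _)
  have hmease : ∀ i, Measurable (fun _ : Ω => (Pi.single i 1 : Fin n → ℝ)) :=
    fun i => measurable_const
  have hL2e : ∀ i, MemLp (fun _ : Ω => (Pi.single i 1 : Fin n → ℝ)) 2 μ :=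
    fun i => memLp_const _
  -- energy form representation with (gradφ j + e_j)
  have hrep : ∀ i j, Dhom i j
      = ∫ ω, ((Pi.single i 1 : Fin n → ℝ) + gradφ i ω) ⬝ᵥ
          (D ω *ᵥ (gradφ j ω + (Pi.single j 1 : Fin n → ℝ))) ∂μ := by
    intro i j
    have hsplit : (fun ω => ((Pi.single i 1 : Fin n → ℝ) + gradφ i ω) ⬝ᵥ
          (D ω *ᵥ (gradφ j ω + (Pi.single j 1 : Fin n → ℝ))))
        = fun ω => (Pi.single i 1 : Fin n → ℝ) ⬝ᵥ
            (D ω *ᵥ (gradφ j ω + (Pi.single j 1 : Fin n → ℝ)))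
          + gradφ i ω ⬝ᵥ (D ω *ᵥ (gradφ j ω + (Pi.single j 1 : Fin n → ℝ))) := by
      funext ω; rw [add_dotProduct]
    rw [hsplit, integral_add (hInt _ _ (hmease i) (hmeasw j) (hL2e i) (hL2w j))
        (hInt _ _ (hgmeas i) (hmeasw j) (hgL2 i) (hL2w j)), hcell i j, add_zero, hDhom i j]
  have hrep' : ∀ i j, Dhom i j
      = ∫ ω, ((Pi.single i 1 : Fin n → ℝ) + gradφ i ω) ⬝ᵥ
          (D ω *ᵥ ((Pi.single j 1 : Fin n → ℝ) + gradφ j ω)) ∂μ := by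
    intro i j
    rw [hrep i j]
    congr 1; funext ω; rw [add_comm (gradφ j ω)]
  refine ⟨fun i j => ?_, hrep'⟩
  rw [hrep' i j, hrep' j i]
  congr 1; funext ω
  exact hsym ω _ _
end

section
/- The homogenized matrix D^hom is positive definite: for every ξ ∈ ℝ^n \ {0}, ξ · D^hom ξ = ∫_Ω (ξ + ∇_ω φ_ξ) · D (ξ + ∇_ω φ_ξ) dμ ≥ c |ξ|² > 0, where φ_ξ = Σ_j ξ_j φ_j and c is the ellipticity constant of D. -/
open MeasureTheory Matrix

/-- Positive definiteness of the homogenized matrix: ξ·D^hom ξ equals the cell energy and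
is bounded below by c|ξ|² > 0 for ξ ≠ 0. -/
theorem stmt_14 (n : ℕ) (Ω : Type*) [MeasurableSpace Ω]
    (μ : Measure Ω) [IsProbabilityMeasure μ]
    (D : Ω → Matrix (Fin n) (Fin n) ℝ)
    (hDmeas : ∀ i j, Measurable fun ω => D ω i j)
    (hDbdd : ∃ C, ∀ ω i j, |D ω i j| ≤ C)
    (hDsymm : ∀ ω, (D ω).IsSymm)
    (c : ℝ) (hc : 0 < c)
    (hDell : ∀ (ω : Ω) (η : Fin n → ℝ), c * ∑ k, η k ^ 2 ≤ η ⬝ᵥ ((D ω) *ᵥ η))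
    (gradφ : Fin n → Ω → Fin n → ℝ)
    (hgmeas : ∀ j, Measurable (gradφ j))
    (hgL2 : ∀ j, MemLp (gradφ j) 2 μ)
    (hcell : ∀ i j, ∫ ω, gradφ i ω ⬝ᵥ ((D ω) *ᵥ (gradφ j ω + (Pi.single j 1 : Fin n → ℝ))) ∂μ = 0)
    -- mean-zero property of stochastic gradients:
    (hmean : ∀ j k, ∫ ω, gradφ j ω k ∂μ = 0)
    (Dhom : Matrix (Fin n) (Fin n) ℝ)
    (hDhom : ∀ i j, Dhom i j
      = ∫ ω, (Pi.single i 1 : Fin n → ℝ) ⬝ᵥ ((D ω) *ᵥ (gradφ j ω + (Pi.single j 1 : Fin n → ℝ))) ∂μ) :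
    ∀ ξ : Fin n → ℝ, ξ ≠ 0 →
      (ξ ⬝ᵥ (Dhom *ᵥ ξ)
        = ∫ ω, (ξ + fun k => ∑ j, ξ j * gradφ j ω k) ⬝ᵥ
            ((D ω) *ᵥ (ξ + fun k => ∑ j, ξ j * gradφ j ω k)) ∂μ) ∧
      c * ∑ k, ξ k ^ 2 ≤ ξ ⬝ᵥ (Dhom *ᵥ ξ) ∧
      0 < c * ∑ k, ξ k ^ 2 := by
  intro ξ hξ
  obtain ⟨C, hC⟩ := hDbdd
  -- components of the gradients are in L²
  have mφ : ∀ j k, MemLp (fun ω => gradφ j ω k) 2 μ := fun j k =>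
    (ContinuousLinearMap.proj k : (Fin n → ℝ) →L[ℝ] ℝ).comp_memLp' (hgL2 j)
  -- product integrability
  have hprod : ∀ (a b : Ω → ℝ), MemLp a 2 μ → MemLp b 2 μ → ∀ k l,
      Integrable (fun ω => a ω * D ω k l * b ω) μ := by
    intro a b ha hb k l
    have hDb : MemLp (fun ω => D ω k l * b ω) 2 μ := by
      refine MemLp.of_le_mul (c := |C|) hb
        ((hDmeas k l).aestronglyMeasurable.mul hb.aestronglyMeasurable) ?_
      filter_upwards with ω
      calc ‖D ω k l * b ω‖ = |D ω k l| * ‖b ω‖ := by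
            rw [Real.norm_eq_abs, Real.norm_eq_abs, abs_mul]
        _ ≤ |C| * ‖b ω‖ :=
            mul_le_mul_of_nonneg_right ((hC ω k l).trans (le_abs_self C)) (norm_nonneg _)
    have h1 : MemLp (a • fun ω => D ω k l * b ω) 1 μ :=
      MemLp.smul hDb ha
    rw [memLp_one_iff_integrable] at h1
    have : (fun ω => a ω * D ω k l * b ω) = a • fun ω => D ω k l * b ω := by
      funext ω
      simp [mul_assoc]
    rw [this]
    exact h1
  -- dot product expansion
  have hdot : ∀ (u w : Fin n → ℝ) (M : Matrix (Fin n) (Fin n) ℝ),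
      u ⬝ᵥ (M *ᵥ w) = ∑ k, ∑ l, u k * M k l * w l := by
    intro u w M
    simp [dotProduct, mulVec, Finset.mul_sum, mul_assoc]
  -- integrability of quadratic forms
  have hIntD : ∀ (a b : Ω → Fin n → ℝ), (∀ k, MemLp (fun ω => a ω k) 2 μ) →
      (∀ k, MemLp (fun ω => b ω k) 2 μ) →
      Integrable (fun ω => a ω ⬝ᵥ (D ω *ᵥ b ω)) μ := by
    intro a b ha hb
    have h : (fun ω => a ω ⬝ᵥ (D ω *ᵥ b ω))
        = fun ω => ∑ k, ∑ l, a ω k * D ω k l * b ω l := funext fun ω => hdot _ _ _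
    rw [h]
    exact integrable_finset_sum _ fun k _ =>
      integrable_finset_sum _ fun l _ => hprod _ _ (ha k) (hb l) k l
  -- the correctors with the unit vector added
  set w : Fin n → Ω → Fin n → ℝ := fun j ω => gradφ j ω + Pi.single j 1 with hw
  have mW : ∀ j k, MemLp (fun ω => w j ω k) 2 μ := by
    intro j k
    have : (fun ω => w j ω k) = fun ω => gradφ j ω k + (Pi.single j 1 : Fin n → ℝ) k := rfl
    rw [this]
    exact (mφ j k).add (memLp_const _)
  -- the field v
  set v : Ω → Fin n → ℝ := fun ω => ξ + fun k => ∑ j, ξ j * gradφ j ω k with hvdef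
  have mG : ∀ k, MemLp (fun ω => ∑ j, ξ j * gradφ j ω k) 2 μ := by
    intro k
    exact memLp_finset_sum _ fun j _ => (mφ j k).const_mul (ξ j)
  have mv : ∀ k, MemLp (fun ω => v ω k) 2 μ := by
    intro k
    have : (fun ω => v ω k) = fun ω => ξ k + ∑ j, ξ j * gradφ j ω k := rfl
    rw [this]
    exact (memLp_const (ξ k)).add (mG k)
  have hvsum : ∀ ω, v ω = ∑ j, ξ j • w j ω := by
    intro ω
    funext k
    simp only [hvdef, hw, Pi.add_apply, Finset.sum_apply, Pi.smul_apply, smul_eq_mul,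
      Pi.single_apply, mul_add, Finset.sum_add_distrib, mul_ite, mul_one, mul_zero,
      Finset.sum_ite_eq', Finset.mem_univ, if_true, Finset.sum_ite_eq]
    ring
  -- dot products with finite sums
  have hdots : ∀ (u : Fin n → ℝ) (x : Fin n → Fin n → ℝ),
      u ⬝ᵥ (∑ j, x j) = ∑ j, u ⬝ᵥ x j := by
    intro u x
    simp only [dotProduct, Finset.sum_apply, Finset.mul_sum]
    exact Finset.sum_comm
  have hdots' : ∀ (u : Fin n → ℝ) (x : Fin n → Fin n → ℝ),
      (∑ j, x j) ⬝ᵥ u = ∑ j, x j ⬝ᵥ u := by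
    intro u x
    simp only [dotProduct, Finset.sum_apply, Finset.sum_mul]
    exact Finset.sum_comm
  -- pointwise bilinearity
  have hlinR : ∀ (M : Matrix (Fin n) (Fin n) ℝ) (a : Fin n → ℝ) (b : Fin n → Fin n → ℝ),
      a ⬝ᵥ (M *ᵥ ∑ j, ξ j • b j) = ∑ j, ξ j * (a ⬝ᵥ (M *ᵥ b j)) := by
    intro M a b
    rw [show M *ᵥ ∑ j, ξ j • b j = ∑ j, ξ j • (M *ᵥ b j) by
      rw [← Matrix.mulVecLin_apply, map_sum]
      simp [Matrix.mulVecLin_apply, Matrix.mulVec_smul]]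
    rw [hdots a _]
    exact Finset.sum_congr rfl fun j _ => by rw [dotProduct_smul, smul_eq_mul]
  have hlinL : ∀ (M : Matrix (Fin n) (Fin n) ℝ) (a : Fin n → ℝ) (b : Fin n → Fin n → ℝ),
      (∑ j, ξ j • b j) ⬝ᵥ (M *ᵥ a) = ∑ j, ξ j * (b j ⬝ᵥ (M *ᵥ a)) := by
    intro M a b
    rw [hdots' _ _]
    exact Finset.sum_congr rfl fun j _ => by rw [smul_dotProduct, smul_eq_mul]
  -- integral of a ⬝ᵥ D *ᵥ v as a sum
  have hswap : ∀ (a : Ω → Fin n → ℝ), (∀ k, MemLp (fun ω => a ω k) 2 μ) →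
      ∫ ω, a ω ⬝ᵥ (D ω *ᵥ v ω) ∂μ
        = ∑ j, ξ j * ∫ ω, a ω ⬝ᵥ (D ω *ᵥ w j ω) ∂μ := by
    intro a ha
    have h1 : (fun ω => a ω ⬝ᵥ (D ω *ᵥ v ω))
        = fun ω => ∑ j, ξ j * (a ω ⬝ᵥ (D ω *ᵥ w j ω)) := by
      funext ω
      rw [hvsum ω, hlinR]
    rw [h1, integral_finset_sum _ fun j _ =>
      (hIntD a (w j) ha (mW j)).const_mul (ξ j)]
    exact Finset.sum_congr rfl fun j _ => integral_const_mul _ _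
  -- Dhom entries as integrals
  have hDhom' : ∀ i j, Dhom i j = ∫ ω, (Pi.single i 1 : Fin n → ℝ) ⬝ᵥ (D ω *ᵥ w j ω) ∂μ :=
    fun i j => hDhom i j
  have msingle : ∀ i : Fin n, ∀ k, MemLp (fun _ : Ω => (Pi.single i 1 : Fin n → ℝ) k) 2 μ :=
    fun i k => memLp_const _
  -- first part: the energy identity
  have key : ξ ⬝ᵥ (Dhom *ᵥ ξ) = ∫ ω, v ω ⬝ᵥ (D ω *ᵥ v ω) ∂μ := by
    have hQ : ∫ ω, v ω ⬝ᵥ (D ω *ᵥ v ω) ∂μ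
        = ∑ i, ξ i * ∫ ω, w i ω ⬝ᵥ (D ω *ᵥ v ω) ∂μ := by
      have h1 : (fun ω => v ω ⬝ᵥ (D ω *ᵥ v ω))
          = fun ω => ∑ i, ξ i * (w i ω ⬝ᵥ (D ω *ᵥ v ω)) := by
        funext ω
        rw [show v ω ⬝ᵥ (D ω *ᵥ v ω) = (∑ j, ξ j • w j ω) ⬝ᵥ (D ω *ᵥ v ω) by rw [← hvsum ω],
          hlinL]
      rw [h1, integral_finset_sum _ fun i _ =>
        (hIntD (w i) v (mW i) mv).const_mul (ξ i)]
      exact Finset.sum_congr rfl fun i _ => integral_const_mul _ _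
    have hWi : ∀ i, ∫ ω, w i ω ⬝ᵥ (D ω *ᵥ v ω) ∂μ = ∑ j, ξ j * Dhom i j := by
      intro i
      have hsplit : (fun ω => w i ω ⬝ᵥ (D ω *ᵥ v ω))
          = fun ω => gradφ i ω ⬝ᵥ (D ω *ᵥ v ω)
              + (Pi.single i 1 : Fin n → ℝ) ⬝ᵥ (D ω *ᵥ v ω) := by
        funext ω
        rw [show w i ω = gradφ i ω + Pi.single i 1 from rfl, add_dotProduct]
      rw [hsplit, integral_add (hIntD (gradφ i) v (mφ i) mv)
        (hIntD (fun _ => Pi.single i 1) v (msingle i) mv)]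
      have hz : ∫ ω, gradφ i ω ⬝ᵥ (D ω *ᵥ v ω) ∂μ = 0 := by
        rw [hswap (gradφ i) (mφ i)]
        refine Finset.sum_eq_zero fun j _ => ?_
        rw [show (∫ ω, gradφ i ω ⬝ᵥ (D ω *ᵥ w j ω) ∂μ) = 0 from hcell i j, mul_zero]
      have he : ∫ ω, (Pi.single i 1 : Fin n → ℝ) ⬝ᵥ (D ω *ᵥ v ω) ∂μ = ∑ j, ξ j * Dhom i j := by
        rw [hswap (fun _ => Pi.single i 1) (msingle i)]
        exact Finset.sum_congr rfl fun j _ => by rw [← hDhom' i j]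
      rw [hz, he, zero_add]
    rw [hQ]
    rw [show ξ ⬝ᵥ (Dhom *ᵥ ξ) = ∑ i, ξ i * ∑ j, ξ j * Dhom i j by
      simp [dotProduct, mulVec, Finset.mul_sum]
      exact Finset.sum_congr rfl fun i _ => Finset.sum_congr rfl fun j _ => by ring]
    exact Finset.sum_congr rfl fun i _ => by rw [hWi i]
  -- second part: the lower bound
  have hint_sq : Integrable (fun ω => c * ∑ k, v ω k ^ 2) μ :=
    (integrable_finset_sum _ fun k _ => (mv k).integrable_sq).const_mul c
  have hlow : ∀ k, ξ k ^ 2 ≤ ∫ ω, v ω k ^ 2 ∂μ := by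
    intro k
    have hG : Integrable (fun ω => ∑ j, ξ j * gradφ j ω k) μ := (mG k).integrable one_le_two
    have hGz : ∫ ω, ∑ j, ξ j * gradφ j ω k ∂μ = 0 := by
      rw [integral_finset_sum _ fun j _ => ((mφ j k).integrable one_le_two).const_mul (ξ j)]
      refine Finset.sum_eq_zero fun j _ => ?_
      rw [integral_const_mul, hmean j k, mul_zero]
    have hexp : (fun ω => v ω k ^ 2)
        = fun ω => ξ k ^ 2 + (2 * ξ k) * (∑ j, ξ j * gradφ j ω k)
            + (∑ j, ξ j * gradφ j ω k) ^ 2 := by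
      funext ω
      show (ξ k + ∑ j, ξ j * gradφ j ω k) ^ 2 = _
      ring
    rw [hexp, integral_add (by
        exact (integrable_const _).add (hG.const_mul _)) ((mG k).integrable_sq),
      integral_add (integrable_const _) (hG.const_mul _), integral_const,
      integral_const_mul, hGz, mul_zero, add_zero]
    simp only [measure_univ, probReal_univ, ENNReal.toReal_one, smul_eq_mul, one_mul]
    nlinarith [integral_nonneg (f := fun ω => (∑ j, ξ j * gradφ j ω k) ^ 2) (fun ω => sq_nonneg _) (μ := μ)]
  have hineq : c * ∑ k, ξ k ^ 2 ≤ ξ ⬝ᵥ (Dhom *ᵥ ξ) := by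
    rw [key]
    calc c * ∑ k, ξ k ^ 2 ≤ c * ∑ k, ∫ ω, v ω k ^ 2 ∂μ := by
          refine mul_le_mul_of_nonneg_left (Finset.sum_le_sum fun k _ => hlow k) hc.le
      _ = ∫ ω, c * ∑ k, v ω k ^ 2 ∂μ := by
          rw [integral_const_mul, integral_finset_sum _ fun k _ => (mv k).integrable_sq]
      _ ≤ ∫ ω, v ω ⬝ᵥ (D ω *ᵥ v ω) ∂μ :=
          integral_mono hint_sq (hIntD v v mv mv) fun ω => hDell ω (v ω)
  have hpos : 0 < c * ∑ k, ξ k ^ 2 := by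
    refine mul_pos hc ?_
    obtain ⟨k, hk⟩ := Function.ne_iff.mp hξ
    exact Finset.sum_pos' (fun k _ => sq_nonneg _)
      ⟨k, Finset.mem_univ k, lt_of_le_of_ne (sq_nonneg _) (Ne.symm (pow_ne_zero 2 hk))⟩
  exact ⟨key, hineq, hpos⟩
end

section
/- If ψ ∈ C_b^1(Ω) with ψ = 0 on Γ := ∂A and φ ∈ C_b^1(Ω)^n, then ∫_A ψ div_ω φ dμ = −∫_A ∇_ω ψ · φ dμ (the boundary term in the stochastic Gauss theorem vanishes). -/
open MeasureTheory Function Topology Filter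

section
variable {Ω : Type*} [MeasurableSpace Ω] {μ : Measure Ω}

lemma frontier_crossing {E : Type*} [AddCommGroup E] [Module ℝ E] [TopologicalSpace E]
    [ContinuousSMul ℝ E] (S : Set E) (v : E)
    (h0 : ((0:E) ∈ S) ↔ v ∉ S) : ∃ s ∈ Set.Icc (0:ℝ) 1, s • v ∈ frontier S := by
  by_contra hcon
  push_neg at hcon
  set seg : Set E := (fun t : ℝ => t • v) '' Set.Icc 0 1 with hseg
  have hcontf : Continuous fun t : ℝ => t • v := continuous_id.smul continuous_const
  have hconn : IsPreconnected seg := (isPreconnected_Icc).image _ hcontf.continuousOn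
  have h0mem : (0:E) ∈ seg := ⟨0, by norm_num, by simp⟩
  have hvmem : v ∈ seg := ⟨1, by norm_num, by simp⟩
  have hsub : seg ⊆ interior S ∪ (closure S)ᶜ := by
    rintro x ⟨t, ht, rfl⟩
    have hx := hcon t ht
    rw [frontier, Set.mem_diff] at hx
    push_neg at hx
    by_cases hcl : t • v ∈ closure S
    · exact Or.inl (hx hcl)
    · exact Or.inr hcl
  have hdisj : Disjoint (interior S) (closure S)ᶜ :=
    Set.disjoint_compl_right_iff_subset.mpr (interior_subset.trans subset_closure)
  rcases hconn.subset_or_subset isOpen_interior (isClosed_closure.isOpen_compl) hdisj hsub with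
    hsub1 | hsub2
  · by_cases h : (0:E) ∈ S
    · exact (h0.mp h) (interior_subset (hsub1 hvmem))
    · exact h (interior_subset (hsub1 h0mem))
  · by_cases h : (0:E) ∈ S
    · exact (hsub2 h0mem) (subset_closure h)
    · exact (hsub2 hvmem) (subset_closure (by tauto))

lemma integ_bdd (ν : Measure Ω) [IsFiniteMeasure ν]
    {f : Ω → ℝ} (hm : AEStronglyMeasurable f ν) {M : ℝ} (hb : ∀ ω, |f ω| ≤ M) :
    Integrable f ν :=
  ⟨hm, HasFiniteIntegral.of_bounded (C := M)
    (Filter.Eventually.of_forall (by simpa [Real.norm_eq_abs] using hb))⟩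

end

/-- Stochastic Gauss theorem on A: if ψ ∈ C_b¹(Ω) vanishes on Γ = ∂A, then
∫_A ψ div_ω φ dμ = −∫_A ∇_ω ψ · φ dμ (the boundary term vanishes). -/
theorem stmt_18 (n : ℕ) (Ω : Type*) [MetricSpace Ω] [MeasurableSpace Ω] [BorelSpace Ω]
    (μ : Measure Ω) [IsProbabilityMeasure μ]
    (τ : (Fin n → ℝ) → Ω → Ω)
    (hgrp : ∀ x y, τ x ∘ τ y = τ (x + y)) (hid : τ 0 = id)
    (hcont : Continuous fun p : (Fin n → ℝ) × Ω => τ p.1 p.2)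
    (hmp : ∀ x, MeasurePreserving (τ x) μ μ)
    (herg : ∀ g : Ω → ℝ, Measurable g →
      (∀ x, ∀ᵐ ω ∂μ, g (τ x ω) = g ω) → ∃ c : ℝ, ∀ᵐ ω ∂μ, g ω = c)
    -- the random closed set structure : realizations A(ω) with boundary Γ(ω)
    (Aset : Ω → Set (Fin n → ℝ)) (hclosed : ∀ ω, IsClosed (Aset ω))
    (A : Set Ω) (hA : MeasurableSet A)
    (hAstat : ∀ (ω : Ω) (x : Fin n → ℝ), x ∈ Aset ω ↔ τ x ω ∈ A)
    (Γ : Set Ω) (hΓ : MeasurableSet Γ)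
    (hΓstat : ∀ (ω : Ω) (x : Fin n → ℝ), x ∈ frontier (Aset ω) ↔ τ x ω ∈ Γ)
    (ψ : Ω → ℝ) (Dψ : Ω → Fin n → ℝ)
    (hψc : Continuous ψ) (hψb : ∃ C, ∀ ω, |ψ ω| ≤ C)
    (hψd : ∀ ω i, HasDerivAt (fun h : ℝ => ψ (τ (h • (Pi.single i 1 : Fin n → ℝ)) ω)) (Dψ ω i) 0)
    (hDψc : Continuous Dψ) (hDψb : ∃ C, ∀ ω i, |Dψ ω i| ≤ C)
    (hψΓ : ∀ ω ∈ Γ, ψ ω = 0)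
    (φ : Ω → Fin n → ℝ) (Dφ : Ω → Fin n → Fin n → ℝ)
    (hφc : Continuous φ) (hφb : ∃ C, ∀ ω i, |φ ω i| ≤ C)
    (hφd : ∀ ω i j, HasDerivAt (fun h : ℝ => φ (τ (h • (Pi.single i 1 : Fin n → ℝ)) ω) j) (Dφ ω i j) 0)
    (hDφc : Continuous Dφ) (hDφb : ∃ C, ∀ ω i j, |Dφ ω i j| ≤ C) :
    ∫ ω in A, ψ ω * ∑ i, Dφ ω i i ∂μ = - ∫ ω in A, ∑ i, Dψ ω i * φ ω i ∂μ := by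
  classical
  obtain ⟨C₁, hC₁⟩ := hψb
  obtain ⟨C₂, hC₂⟩ := hDψb
  obtain ⟨C₃, hC₃⟩ := hφb
  obtain ⟨C₄, hC₄⟩ := hDφb
  set Bψ := max C₁ 0 with hBψdef
  set BDψ := max C₂ 0 with hBDψdef
  set Bφ := max C₃ 0 with hBφdef
  set BDφ := max C₄ 0 with hBDφdef
  have hBψ : ∀ ω, |ψ ω| ≤ Bψ := fun ω => (hC₁ ω).trans (le_max_left _ _)
  have hBDψ : ∀ ω i, |Dψ ω i| ≤ BDψ := fun ω i => (hC₂ ω i).trans (le_max_left _ _)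
  have hBφ : ∀ ω i, |φ ω i| ≤ Bφ := fun ω i => (hC₃ ω i).trans (le_max_left _ _)
  have hBDφ : ∀ ω i j, |Dφ ω i j| ≤ BDφ := fun ω i j => (hC₄ ω i j).trans (le_max_left _ _)
  have hBψ0 : 0 ≤ Bψ := le_max_right _ _
  have hBDψ0 : 0 ≤ BDψ := le_max_right _ _
  have hBφ0 : 0 ≤ Bφ := le_max_right _ _
  have hBDφ0 : 0 ≤ BDφ := le_max_right _ _
  set K := BDψ * Bφ + Bψ * BDφ with hKdef
  have hK0 : 0 ≤ K := add_nonneg (mul_nonneg hBDψ0 hBφ0) (mul_nonneg hBψ0 hBDφ0)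
  -- continuity of translations
  have hτc : ∀ x, Continuous (τ x) := fun x => hcont.comp (Continuous.prodMk_right x)
  have hτm : ∀ x, Measurable (τ x) := fun x => (hτc x).measurable
  -- group laws pointwise
  have hgrp' : ∀ x y ω, τ x (τ y ω) = τ (x + y) ω := fun x y ω => congrFun (hgrp x y) ω
  have hid' : ∀ ω, τ 0 ω = ω := fun ω => by rw [hid, id_eq]
  -- shift invariance of integrals
  have hshift : ∀ (x : Fin n → ℝ) (f : Ω → ℝ), ∫ ω, f (τ x ω) ∂μ = ∫ ω, f ω ∂μ := by
    intro x f
    have hemb : MeasurableEmbedding (τ x) :=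
      MeasurableEquiv.measurableEmbedding
        ⟨⟨τ x, τ (-x), fun ω => by rw [hgrp' (-x) x ω, neg_add_cancel, hid' ω],
          fun ω => by rw [hgrp' x (-x) ω, add_neg_cancel, hid' ω]⟩, hτm x, hτm (-x)⟩
    exact (hmp x).integral_comp hemb f
  -- the indicator
  set χ : Ω → ℝ := A.indicator (fun _ => (1:ℝ)) with hχdef
  have hχm : Measurable χ := measurable_const.indicator hA
  have hχval : ∀ (x : Fin n → ℝ) (ω : Ω), χ (τ x ω) = if x ∈ Aset ω then 1 else 0 := by
    intro x ω
    by_cases h : x ∈ Aset ω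
    · simp [hχdef, Set.indicator_apply, (hAstat ω x).mp h, h]
    · simp only [hχdef, Set.indicator_apply]
      rw [if_neg (fun hh => h ((hAstat ω x).mpr hh)), if_neg h]
  have hχval0 : ∀ ω : Ω, χ ω = if (0 : Fin n → ℝ) ∈ Aset ω then 1 else 0 := by
    intro ω
    have := hχval 0 ω
    rwa [hid' ω] at this
  have hχbdd : ∀ ω, |χ ω| ≤ 1 := by
    intro ω; rw [hχval0]; split <;> norm_num
  -- the key lemma: for each direction i, the integral of the derivative of g = ψ * φ i over A vanishes
  have key : ∀ i : Fin n, ∫ ω in A, (Dψ ω i * φ ω i + ψ ω * Dφ ω i i) ∂μ = 0 := by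
    intro i
    set e : Fin n → ℝ := Pi.single i 1 with hedef
    set g : Ω → ℝ := fun ω => ψ ω * φ ω i with hgdef
    set Dg : Ω → ℝ := fun ω => Dψ ω i * φ ω i + ψ ω * Dφ ω i i with hDgdef
    have hgc : Continuous g := hψc.mul ((continuous_apply i).comp hφc)
    have hDgc : Continuous Dg :=
      (((continuous_apply i).comp hDψc).mul ((continuous_apply i).comp hφc)).add
        (hψc.mul ((continuous_apply i).comp ((continuous_apply i).comp hDφc)))
    have hgb : ∀ ω, |g ω| ≤ Bψ * Bφ := by
      intro ω
      rw [hgdef, abs_mul]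
      exact mul_le_mul (hBψ ω) (hBφ ω i) (abs_nonneg _) hBψ0
    have hDgb : ∀ ω, |Dg ω| ≤ K := by
      intro ω
      refine (abs_add_le _ _).trans ?_
      have h1 : |Dψ ω i * φ ω i| ≤ BDψ * Bφ := by
        rw [abs_mul]; exact mul_le_mul (hBDψ ω i) (hBφ ω i) (abs_nonneg _) hBDψ0
      have h2 : |ψ ω * Dφ ω i i| ≤ Bψ * BDφ := by
        rw [abs_mul]; exact mul_le_mul (hBψ ω) (hBDφ ω i i) (abs_nonneg _) hBψ0
      rw [hKdef]; exact add_le_add h1 h2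
    have hgΓ : ∀ ω ∈ Γ, g ω = 0 := fun ω hω => by rw [hgdef]; simp [hψΓ ω hω]
    -- derivative of g along the orbit at 0
    have hg0 : ∀ ω, HasDerivAt (fun t : ℝ => g (τ (t • e) ω)) (Dg ω) 0 := by
      intro ω
      have := (hψd ω i).mul (hφd ω i i)
      simpa [hgdef, hDgdef, hedef, zero_smul, hid', hid, Pi.mul_def] using this
    -- derivative everywhere along the orbit
    have hderiv : ∀ ω t, HasDerivAt (fun s : ℝ => g (τ (s • e) ω)) (Dg (τ (t • e) ω)) t := by
      intro ω t
      have h1 := hg0 (τ (t • e) ω)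
      have h2 : HasDerivAt (fun s : ℝ => s - t) 1 t := (hasDerivAt_id t).sub_const t
      have h3 := HasDerivAt.comp (h₂ := fun u : ℝ => g (τ (u • e) (τ (t • e) ω)))
        (h := fun s : ℝ => s - t) t (by simpa using h1) h2
      have heq : (fun s : ℝ => g (τ ((s - t) • e) (τ (t • e) ω))) =
          fun s : ℝ => g (τ (s • e) ω) := by
        funext s
        rw [hgrp' _ _ ω]
        congr 2
        rw [← add_smul]
        ring_nf
      rw [mul_one] at h3
      simpa [Function.comp, heq] using (heq ▸ h3)
    -- Lipschitz estimate along orbits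
    have hlip : ∀ ω a b, |g (τ (a • e) ω) - g (τ (b • e) ω)| ≤ K * |a - b| := by
      intro ω a b
      have := Convex.norm_image_sub_le_of_norm_hasDerivWithin_le
        (f := fun s : ℝ => g (τ (s • e) ω)) (f' := fun s : ℝ => Dg (τ (s • e) ω))
        (s := Set.univ) (C := K)
        (fun x _ => (hderiv ω x).hasDerivWithinAt)
        (fun x _ => by rw [Real.norm_eq_abs]; exact hDgb _)
        convex_univ (Set.mem_univ b) (Set.mem_univ a)
      simpa [Real.norm_eq_abs] using this
    -- the filter of nonzero h tending to 0
    set l : Filter ℝ := nhdsWithin (0:ℝ) {(0:ℝ)}ᶜ with hldef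
    haveI hlne : l.NeBot := by
      rw [hldef]
      exact (inferInstance : (𝓝[≠] (0:ℝ)).NeBot)
    -- Step A: difference quotients converge to the integral of Dg over A
    have stepA : Filter.Tendsto (fun h : ℝ => ∫ ω in A, (g (τ (h • e) ω) - g ω) / h ∂μ) l
        (𝓝 (∫ ω in A, Dg ω ∂μ)) := by
      apply tendsto_integral_filter_of_dominated_convergence (bound := fun _ => K)
      · refine Filter.Eventually.of_forall fun h => ?_
        have : Continuous fun ω : Ω => (g (τ (h • e) ω) - g ω) / h :=
          ((hgc.comp (hτc (h • e))).sub hgc).div_const h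
        exact this.aestronglyMeasurable
      · refine Filter.eventually_of_mem self_mem_nhdsWithin fun h hh => ?_
        refine Filter.Eventually.of_forall fun ω => ?_
        have hne : h ≠ 0 := hh
        have := hlip ω h 0
        rw [zero_smul, hid' ω, sub_zero] at this
        rw [Real.norm_eq_abs, abs_div]
        rw [div_le_iff₀ (abs_pos.mpr hne)]
        exact this
      · exact integrable_const K
      · refine Filter.Eventually.of_forall fun ω => ?_
        have hd := (hderiv ω 0)
        rw [zero_smul, hid' ω] at hd
        have := hasDerivAt_iff_tendsto_slope.mp hd
        refine this.congr fun h => ?_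
        rw [slope_def_field, sub_zero, zero_smul, hid' ω]
    -- Step B: rewrite the difference quotient integral using measure preservation
    have hgm : Measurable g := hgc.measurable
    have stepB : ∀ h : ℝ, h ≠ 0 → ∫ ω in A, (g (τ (h • e) ω) - g ω) / h ∂μ
        = ∫ ω, g ω * (χ (τ ((-h) • e) ω) - χ ω) / h ∂μ := by
      intro h hh
      have i1 : Integrable (fun ω => χ ω * g (τ (h • e) ω)) μ :=
        integ_bdd μ ((hχm.mul (hgm.comp (hτm _))).aestronglyMeasurable)
          (M := 1 * (Bψ * Bφ)) (fun ω => by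
            rw [abs_mul]
            exact mul_le_mul (hχbdd ω) (hgb _) (abs_nonneg _) zero_le_one)
      have i2 : Integrable (fun ω => χ ω * g ω) μ :=
        integ_bdd μ ((hχm.mul hgm).aestronglyMeasurable)
          (M := 1 * (Bψ * Bφ)) (fun ω => by
            rw [abs_mul]
            exact mul_le_mul (hχbdd ω) (hgb _) (abs_nonneg _) zero_le_one)
      have i3 : Integrable (fun ω => χ (τ ((-h) • e) ω) * g ω) μ :=
        integ_bdd μ (((hχm.comp (hτm _)).mul hgm).aestronglyMeasurable)
          (M := 1 * (Bψ * Bφ)) (fun ω => by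
            rw [abs_mul]
            exact mul_le_mul (hχbdd _) (hgb _) (abs_nonneg _) zero_le_one)
      have e1 : ∫ ω in A, (g (τ (h • e) ω) - g ω) / h ∂μ
          = ∫ ω, χ ω * (g (τ (h • e) ω) - g ω) / h ∂μ := by
        rw [← integral_indicator hA]
        congr 1
        funext ω
        by_cases hω : ω ∈ A
        · simp [Set.indicator_of_mem hω, hχdef]
        · simp [Set.indicator_of_notMem hω, hχdef]
      have e2 : ∫ ω, χ ω * g (τ (h • e) ω) ∂μ = ∫ ω, χ (τ ((-h) • e) ω) * g ω ∂μ := by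
        have := hshift (h • e) (fun ω => χ (τ ((-h) • e) ω) * g ω)
        rw [← this]
        congr 1
        funext ω
        rw [hgrp' ((-h) • e) (h • e) ω]
        congr 2
        rw [neg_smul, neg_add_cancel, hid' ω]
      rw [e1]
      have e3 : (fun ω => χ ω * (g (τ (h • e) ω) - g ω) / h)
          = fun ω => (χ ω * g (τ (h • e) ω) - χ ω * g ω) / h := by
        funext ω; ring
      have e4 : (fun ω => g ω * (χ (τ ((-h) • e) ω) - χ ω) / h)
          = fun ω => (χ (τ ((-h) • e) ω) * g ω - χ ω * g ω) / h := by
        funext ω; ring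
      rw [e3, e4, integral_div, integral_div, integral_sub i1 i2, integral_sub i3 i2, e2]
    -- Step C: the right-hand side tends to 0
    have stepC : Filter.Tendsto (fun h : ℝ => ∫ ω, g ω * (χ (τ ((-h) • e) ω) - χ ω) / h ∂μ) l
        (𝓝 0) := by
      have main : Filter.Tendsto (fun h : ℝ => ∫ ω, g ω * (χ (τ ((-h) • e) ω) - χ ω) / h ∂μ) l
          (𝓝 (∫ ω, (0:ℝ) ∂μ)) := ?_
      · simpa using main
      apply tendsto_integral_filter_of_dominated_convergence (bound := fun _ => K)
      · refine Filter.Eventually.of_forall fun h => ?_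
        exact ((hgm.mul ((hχm.comp (hτm _)).sub hχm)).div_const h).aestronglyMeasurable
      · -- the crucial bound: |g ω (χ(τ_{-h}ω) - χ ω)/h| ≤ K
        refine Filter.eventually_of_mem self_mem_nhdsWithin fun h hh => ?_
        refine Filter.Eventually.of_forall fun ω => ?_
        have hne : h ≠ 0 := hh
        rw [Real.norm_eq_abs]
        by_cases hsame : ((-h) • e ∈ Aset ω) ↔ ((0 : Fin n → ℝ) ∈ Aset ω)
        · have : χ (τ ((-h) • e) ω) = χ ω := by
            rw [hχval, hχval0]
            by_cases hm : (0 : Fin n → ℝ) ∈ Aset ω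
            · rw [if_pos (hsame.mpr hm), if_pos hm]
            · rw [if_neg (fun hc => hm (hsame.mp hc)), if_neg hm]
          rw [this]; simpa using hK0
        · -- the orbit crosses the frontier, so |g ω| ≤ K |h|
          have hxor : ((0 : Fin n → ℝ) ∈ Aset ω) ↔ ((-h) • e ∉ Aset ω) := by tauto
          obtain ⟨s, hs01, hsfr⟩ := frontier_crossing (Aset ω) ((-h) • e) hxor
          have hzero : g (τ (s • ((-h) • e)) ω) = 0 :=
            hgΓ _ ((hΓstat ω _).mp hsfr)
          have hrw : s • ((-h) • e) = (s * (-h)) • e := smul_smul s (-h) e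
          have hb1 : |g ω| ≤ K * |h| := by
            have := hlip ω 0 (s * (-h))
            rw [zero_smul, hid' ω, ← hrw, hzero, sub_zero, zero_sub, abs_neg] at this
            refine this.trans ?_
            have : |s * (-h)| = s * |h| := by
              rw [abs_mul, abs_neg, abs_of_nonneg hs01.1]
            rw [this]
            have hs1 : s ≤ 1 := hs01.2
            have h2 : s * |h| ≤ 1 * |h| := mul_le_mul_of_nonneg_right hs1 (abs_nonneg h)
            have h3 : K * (s * |h|) ≤ K * (1 * |h|) := mul_le_mul_of_nonneg_left h2 hK0
            linarith
          have hb2 : |χ (τ ((-h) • e) ω) - χ ω| ≤ 1 := by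
            rw [hχval, hχval0]
            split <;> split <;> norm_num
          rw [abs_div, abs_mul]
          rw [div_le_iff₀ (abs_pos.mpr hne)]
          calc |g ω| * |χ (τ ((-h) • e) ω) - χ ω| ≤ (K * |h|) * 1 :=
              mul_le_mul hb1 hb2 (abs_nonneg _) (by positivity)
            _ = K * |h| := by ring
      · exact integrable_const K
      · -- pointwise convergence to 0
        refine Filter.Eventually.of_forall fun ω => ?_
        by_cases hωΓ : ω ∈ Γ
        · have : ∀ h : ℝ, g ω * (χ (τ ((-h) • e) ω) - χ ω) / h = 0 := by
            intro h; rw [hgΓ ω hωΓ]; ring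
          exact Filter.Tendsto.congr (fun h => (this h).symm) tendsto_const_nhds
        · -- ω ∉ Γ: 0 is not on the frontier of Aset ω, so χ is locally constant along the orbit
          have h0fr : (0 : Fin n → ℝ) ∉ frontier (Aset ω) := by
            intro hc
            exact hωΓ (by rw [← hid' ω]; exact (hΓstat ω 0).mp hc)
          have hev : ∀ᶠ h : ℝ in 𝓝 (0:ℝ), (((-h) • e ∈ Aset ω) ↔ ((0 : Fin n → ℝ) ∈ Aset ω)) := by
            have hcurve : Continuous fun h : ℝ => (-h) • e :=
              (continuous_neg.smul continuous_const)
            have h00 : (-(0:ℝ)) • e = (0 : Fin n → ℝ) := by simp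
            by_cases hm : (0 : Fin n → ℝ) ∈ Aset ω
            · have hint : (0 : Fin n → ℝ) ∈ interior (Aset ω) := by
                by_contra hni
                exact h0fr ⟨subset_closure hm, hni⟩
              have hmem : ∀ᶠ h : ℝ in 𝓝 (0:ℝ), (-h) • e ∈ interior (Aset ω) := by
                refine hcurve.continuousAt.eventually_mem ?_
                show interior (Aset ω) ∈ 𝓝 ((-(0:ℝ)) • e)
                rw [h00]
                exact isOpen_interior.mem_nhds hint
              exact hmem.mono fun h hh => ⟨fun _ => hm, fun _ => interior_subset hh⟩
            · have hcl : (0 : Fin n → ℝ) ∈ (Aset ω)ᶜ := hm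
              have hmem : ∀ᶠ h : ℝ in 𝓝 (0:ℝ), (-h) • e ∈ (Aset ω)ᶜ := by
                refine hcurve.continuousAt.eventually_mem ?_
                show (Aset ω)ᶜ ∈ 𝓝 ((-(0:ℝ)) • e)
                rw [h00]
                exact (hclosed ω).isOpen_compl.mem_nhds hcl
              exact hmem.mono fun h hh => ⟨fun hc => absurd hc hh, fun hc => absurd hc hm⟩
          have hev2 : ∀ᶠ h : ℝ in l, g ω * (χ (τ ((-h) • e) ω) - χ ω) / h = 0 := by
            refine Filter.eventually_of_mem (nhdsWithin_le_nhds hev) fun h hh => ?_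
            have : χ (τ ((-h) • e) ω) = χ ω := by
              rw [hχval, hχval0]
              by_cases hm : (0 : Fin n → ℝ) ∈ Aset ω
              · rw [if_pos (hh.mpr hm), if_pos hm]
              · rw [if_neg (fun hc => hm (hh.mp hc)), if_neg hm]
            rw [this]; ring
          exact Filter.Tendsto.congr' (hev2.mono fun h hh => hh.symm) tendsto_const_nhds
    -- combine: the limit is both ∫_A Dg and 0
    have hfinal : ∫ ω in A, Dg ω ∂μ = 0 := by
      have hEq : ∀ᶠ h : ℝ in l,
          ∫ ω in A, (g (τ (h • e) ω) - g ω) / h ∂μ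
            = ∫ ω, g ω * (χ (τ ((-h) • e) ω) - χ ω) / h ∂μ :=
        Filter.eventually_of_mem self_mem_nhdsWithin fun h hh => stepB h hh
      have := stepA.congr' hEq
      exact tendsto_nhds_unique this stepC
    simpa [hDgdef] using hfinal
  -- conclude: sum over directions
  have i1 : ∀ i : Fin n, Integrable (fun ω => Dψ ω i * φ ω i) (μ.restrict A) := by
    intro i
    exact integ_bdd _ ((((continuous_apply i).comp hDψc).mul
        ((continuous_apply i).comp hφc)).aestronglyMeasurable)
      (M := BDψ * Bφ) (fun ω => by
        rw [abs_mul]; exact mul_le_mul (hBDψ ω i) (hBφ ω i) (abs_nonneg _) hBDψ0)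
  have i2 : ∀ i : Fin n, Integrable (fun ω => ψ ω * Dφ ω i i) (μ.restrict A) := by
    intro i
    exact integ_bdd _ ((hψc.mul ((continuous_apply i).comp
        ((continuous_apply i).comp hDφc))).aestronglyMeasurable)
      (M := Bψ * BDφ) (fun ω => by
        rw [abs_mul]; exact mul_le_mul (hBψ ω) (hBDφ ω i i) (abs_nonneg _) hBψ0)
  have e5 : ∫ ω in A, ψ ω * ∑ i, Dφ ω i i ∂μ
      = ∑ i : Fin n, ∫ ω in A, ψ ω * Dφ ω i i ∂μ := by
    rw [← integral_finset_sum Finset.univ (fun i _ => i2 i)]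
    congr 1
    funext ω
    rw [Finset.mul_sum]
  have e7 : ∫ ω in A, ∑ i, Dψ ω i * φ ω i ∂μ
      = ∑ i : Fin n, ∫ ω in A, Dψ ω i * φ ω i ∂μ :=
    integral_finset_sum Finset.univ (fun i _ => i1 i)
  have e8 : ∀ i : Fin n, (∫ ω in A, Dψ ω i * φ ω i ∂μ) + ∫ ω in A, ψ ω * Dφ ω i i ∂μ = 0 := by
    intro i
    rw [← integral_add (i1 i) (i2 i)]
    exact key i
  have hzero : (∑ i : Fin n, ∫ ω in A, Dψ ω i * φ ω i ∂μ)
      + ∑ i : Fin n, ∫ ω in A, ψ ω * Dφ ω i i ∂μ = 0 := by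
    rw [← Finset.sum_add_distrib]
    rw [Finset.sum_congr rfl (fun i _ => e8 i)]
    simp
  rw [e5, e7]
  linarith
end
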